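/- In ℝ^d with the Euclidean metric, let P be an n-tuple of nonempty closed sites with ε := min_{i≠j} dist(P_i, P_j) > 0, and let R, S satisfy R = Dom S and S = Dom R. If a ∈ R_i and p ∈ P_i is a nearest point of P_i to a, then the cone K := conv({a} ∪ B(p, ε/4)) is contained in R_i. -/

import Mathlib

open EMetric Set

/-- The dominance region of `A` over `B`. -/
def dom {X : Type*} [MetricSpace X] (A B : Set X) : Set X :=
  {x | infEdist x A ≤ infEdist x B}

/-- The operator `Dom` relative to the tuple of sites `P`. -/
def Dom {X : Type*} [MetricSpace X] {n : ℕ} (P R : Fin n → Set X) : Fin n → Set X :=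
  fun i => dom (P i) (⋃ j, ⋃ (_ : j ≠ i), R j)

/-- A half-space determined by two points is convex. -/
lemma convex_dist_le_dist {E : Type*} [NormedAddCommGroup E] [InnerProductSpace ℝ E] (p y : E) :
    Convex ℝ {x : E | dist x p ≤ dist x y} := by
  have h : {x : E | dist x p ≤ dist x y}
      = {x : E | inner ℝ (y - p) x ≤ (‖y‖^2 - ‖p‖^2)/2} := by
    ext x
    simp only [Set.mem_setOf_eq, dist_eq_norm]
    rw [← pow_le_pow_iff_left₀ (norm_nonneg _) (norm_nonneg _) two_ne_zero,
      norm_sub_sq_real, norm_sub_sq_real, inner_sub_left, real_inner_comm x y,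
      real_inner_comm x p]
    constructor <;> intro h <;> nlinarith
  rw [h]
  exact convex_halfSpace_le ((innerSL ℝ (y - p)).toLinearMap.isLinear) _

/-- Cone lemma, Euclidean case: if `a ∈ R i` and `p ∈ P i` is a nearest point of
`P i` to `a`, then `conv({a} ∪ B(p, ε/4)) ⊆ R i`. -/
theorem cone_lemma_euclidean (d : ℕ) {n : ℕ}
    (P R S : Fin n → Set (EuclideanSpace ℝ (Fin d)))
    (hPne : ∀ i, (P i).Nonempty) (hPcl : ∀ i, IsClosed (P i))
    (ε : ℝ) (hε : 0 < ε)
    (hsep : ∀ i j, i ≠ j → ∀ p ∈ P i, ∀ q ∈ P j, ε ≤ dist p q)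
    (hR : R = Dom P S) (hS : S = Dom P R)
    (i : Fin n) (a : EuclideanSpace ℝ (Fin d)) (ha : a ∈ R i)
    (p : EuclideanSpace ℝ (Fin d)) (hp : p ∈ P i)
    (hnear : dist a p = Metric.infDist a (P i)) :
    convexHull ℝ ({a} ∪ Metric.closedBall p (ε / 4)) ⊆ R i := by
  set X : Set (EuclideanSpace ℝ (Fin d)) := ⋃ j, ⋃ (_ : j ≠ i), S j with hXdef
  set D : Set (EuclideanSpace ℝ (Fin d)) := {x | edist x p ≤ infEdist x X} with hDdef
  -- sites are contained in their regions
  have hPR : ∀ k, P k ⊆ R k := by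
    intro k x hx
    rw [hR]
    show infEdist x (P k) ≤ _
    rw [EMetric.infEdist, infEdist_zero_of_mem hx]
    exact zero_le
  -- every point of S j, j ≠ i, is at distance ≥ ε/2 from p
  have key : ∀ j, j ≠ i → ∀ y ∈ S j, ε / 2 ≤ dist y p := by
    intro j hj y hy
    rw [hS] at hy
    have h1 : infEdist y (P j) ≤ edist y p := by
      refine le_trans hy (infEdist_le_edist_of_mem ?_)
      exact Set.mem_iUnion₂.mpr ⟨i, Ne.symm hj, hPR i hp⟩
    have h2 : ENNReal.ofReal (ε - dist y p) ≤ infEdist y (P j) := by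
      rw [EMetric.infEdist, le_infEdist]
      intro q hq
      rw [edist_dist]
      apply ENNReal.ofReal_le_ofReal
      have := hsep i j (Ne.symm hj) p hp q hq
      have := dist_triangle p y q
      rw [dist_comm p y] at this
      linarith
    have h3 : ENNReal.ofReal (ε - dist y p) ≤ ENNReal.ofReal (dist y p) := by
      calc _ ≤ _ := h2.trans h1
        _ = _ := edist_dist y p
    rw [ENNReal.ofReal_le_ofReal_iff dist_nonneg] at h3
    linarith
  -- D is contained in R i
  have hDsub : D ⊆ R i := by
    intro x hx
    rw [hR]
    exact le_trans (infEdist_le_edist_of_mem hp) hx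
  -- a ∈ D
  have haD : a ∈ D := by
    have h1 : edist a p ≤ infEdist a (P i) := by
      rw [EMetric.infEdist, le_infEdist]
      intro q hq
      rw [edist_dist, edist_dist]
      exact ENNReal.ofReal_le_ofReal (hnear ▸ Metric.infDist_le_dist_of_mem hq)
    rw [hR] at ha
    exact le_trans h1 ha
  -- the ball is contained in D
  have hball : Metric.closedBall p (ε / 4) ⊆ D := by
    intro x hx
    rw [Metric.mem_closedBall] at hx
    show edist x p ≤ infEdist x X
    rw [EMetric.infEdist, le_infEdist]
    intro y hy
    rw [edist_dist, edist_dist]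
    apply ENNReal.ofReal_le_ofReal
    obtain ⟨j, hj, hyj⟩ := Set.mem_iUnion₂.mp hy
    have h1 := key j hj y hyj
    have h2 := dist_triangle y x p
    rw [dist_comm y x] at h2
    linarith
  -- D is convex
  have hDconv : Convex ℝ D := by
    have hEq : D = ⋂ y ∈ X, {x | dist x p ≤ dist x y} := by
      ext x
      simp only [hDdef, Set.mem_setOf_eq, Set.mem_iInter, EMetric.infEdist, le_infEdist, edist_dist,
        ENNReal.ofReal_le_ofReal_iff dist_nonneg]
    rw [hEq]
    exact convex_iInter₂ fun y _ => convex_dist_le_dist p y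
  refine (convexHull_min ?_ hDconv).trans hDsub
  exact Set.union_subset (Set.singleton_subset_iff.mpr haD) hball
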